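/- arXiv:1705.05989 — 5 statements merged into one kernel-verified Lean document; each statement's English description precedes it below -/
import Mathlib

section
/- With Stokes data as above, for the right mutation: setting (R_{i+1} f)_c := R_{i+1}∘f_c if τ(c)=i and f_c otherwise, and (R_{i+1} f*)_c := f*_c∘R*_{i+1} if τ(c)=i and f*_c otherwise, the map R_{i+1} f : ⊕_c V_c → V is again an isomorphism of vector spaces, and (R_{i+1}f*)_c ∘ (R_{i+1}f)_c = id_{V_c} for all c. -/
/-- Right mutation of Stokes data: with `R_{i+1} := id − f_{τ⁻¹(i+1)} f*_{τ⁻¹(i+1)}`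
and `R*_{i+1} := id − T f_{τ⁻¹(i+1)} T_{τ⁻¹(i+1)}⁻¹ f*_{τ⁻¹(i+1)}`, setting
`(R_{i+1}f)_c := R_{i+1}∘f_c` if `τ(c)=i` and `f_c` otherwise, and
`(R_{i+1}f*)_c := f*_c∘R*_{i+1}` if `τ(c)=i` and `f*_c` otherwise, the map
`R_{i+1}f : ⊕_c V_c → V` is again an isomorphism of vector spaces, and
`(R_{i+1}f*)_c ∘ (R_{i+1}f)_c = id` for all `c`. -/
theorem stmt6 (k : Type*) [Field k] (C : Type*) [Fintype C] (m : ℕ) (τ : C ≃ Fin m)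
    (V : Type*) [AddCommGroup V] [Module k V] [FiniteDimensional k V]
    (Vc : C → Type*) [∀ c, AddCommGroup (Vc c)] [∀ c, Module k (Vc c)]
    [∀ c, FiniteDimensional k (Vc c)]
    (T : V ≃ₗ[k] V) (Tc : ∀ c, Vc c ≃ₗ[k] Vc c)
    (f : ∀ c, Vc c →ₗ[k] V) (fstar : ∀ c, V →ₗ[k] Vc c)
    (hf : Function.Bijective (fun x : ∀ c, Vc c => ∑ c, f c (x c)))
    (hstar0 : ∀ c c' : C, τ c' < τ c → (fstar c') ∘ₗ (f c) = 0)
    (hstarid : ∀ c : C, (fstar c) ∘ₗ (f c) = LinearMap.id)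
    (hbang0 : ∀ c c' : C, τ c < τ c' →
      ((Tc c').symm.toLinearMap ∘ₗ (fstar c') ∘ₗ T.toLinearMap) ∘ₗ (f c) = 0)
    (hbangid : ∀ c : C,
      ((Tc c).symm.toLinearMap ∘ₗ (fstar c) ∘ₗ T.toLinearMap) ∘ₗ (f c) = LinearMap.id)
    (i ip1 : Fin m) (hip : (ip1 : ℕ) = (i : ℕ) + 1) :
    (Function.Bijective (fun x : ∀ c, Vc c => ∑ c,
        (if τ c = i then
            (LinearMap.id - (f (τ.symm ip1)) ∘ₗ (fstar (τ.symm ip1))) ∘ₗ (f c)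
          else f c) (x c))) ∧
      ∀ c : C,
        (if τ c = i then
            (fstar c) ∘ₗ (LinearMap.id - T.toLinearMap ∘ₗ (f (τ.symm ip1)) ∘ₗ
              (Tc (τ.symm ip1)).symm.toLinearMap ∘ₗ (fstar (τ.symm ip1)))
          else fstar c) ∘ₗ
          (if τ c = i then
              (LinearMap.id - (f (τ.symm ip1)) ∘ₗ (fstar (τ.symm ip1))) ∘ₗ (f c)
            else f c) = LinearMap.id := by
  classical
  set b : C := τ.symm ip1 with hbdef
  set c₀ : C := τ.symm i with hc₀def
  have hτb : τ b = ip1 := τ.apply_symm_apply ip1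
  have hτc₀ : τ c₀ = i := τ.apply_symm_apply i
  have hilt : i < ip1 := Fin.lt_def.mpr (by omega)
  have hbc₀ : c₀ ≠ b := by
    intro h
    have : i = ip1 := by rw [← hτc₀, h, hτb]
    have := Fin.val_eq_of_eq this
    omega
  have hcc₀ : ∀ c : C, τ c = i ↔ c = c₀ := by
    intro c
    constructor
    · intro h; apply τ.injective; rw [h, hτc₀]
    · intro h; rw [h, hτc₀]
  constructor
  · -- bijectivity
    set φ : (∀ c, Vc c) → (∀ c, Vc c) :=
      fun x => Function.update x b (x b - fstar b (f c₀ (x c₀))) with hφdef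
    set ψ : (∀ c, Vc c) → (∀ c, Vc c) :=
      fun x => Function.update x b (x b + fstar b (f c₀ (x c₀))) with hψdef
    have hφc₀ : ∀ x, φ x c₀ = x c₀ := fun x => Function.update_of_ne hbc₀ _ _
    have hψc₀ : ∀ x, ψ x c₀ = x c₀ := fun x => Function.update_of_ne hbc₀ _ _
    have hleft : Function.LeftInverse ψ φ := by
      intro x
      funext c
      by_cases hc : c = b
      · subst hc
        simp only [hψdef, hφdef, Function.update_self, hφc₀,
          Function.update_of_ne hbc₀]
        abel
      · simp only [hψdef, hφdef, Function.update_of_ne hc]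
    have hright : Function.RightInverse ψ φ := by
      intro x
      funext c
      by_cases hc : c = b
      · subst hc
        simp only [hψdef, hφdef, Function.update_self, hψc₀,
          Function.update_of_ne hbc₀]
        abel
      · simp only [hψdef, hφdef, Function.update_of_ne hc]
    have hφbij : Function.Bijective φ := ⟨hleft.injective, hright.surjective⟩
    have key : ∀ x : ∀ c, Vc c,
        (∑ c, (if τ c = i then
            (LinearMap.id - (f (τ.symm ip1)) ∘ₗ (fstar (τ.symm ip1))) ∘ₗ (f c)
          else f c) (x c)) = ∑ c, f c (φ x c) := by
      intro x
      have hL : ∀ c : C, (if τ c = i then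
            (LinearMap.id - (f (τ.symm ip1)) ∘ₗ (fstar (τ.symm ip1))) ∘ₗ (f c)
          else f c) (x c)
          = f c (x c) - (if c = c₀ then f b (fstar b (f c₀ (x c₀))) else 0) := by
        intro c
        by_cases h : τ c = i
        · have hcc : c = c₀ := (hcc₀ c).mp h
          subst hcc
          simp [h, ← hbdef, LinearMap.sub_apply, LinearMap.comp_apply]
          rfl
        · have hcc : ¬ (c = c₀) := fun hh => h ((hcc₀ c).mpr hh)
          simp [h, hcc]
      have hR : ∀ c : C, f c (φ x c)
          = f c (x c) - (if c = b then f b (fstar b (f c₀ (x c₀))) else 0) := by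
        intro c
        by_cases hc : c = b
        · subst hc
          simp [hφdef, Function.update_self, map_sub]
        · simp [hφdef, Function.update_of_ne hc, hc]
      calc (∑ c, (if τ c = i then
            (LinearMap.id - (f (τ.symm ip1)) ∘ₗ (fstar (τ.symm ip1))) ∘ₗ (f c)
          else f c) (x c))
          = ∑ c, (f c (x c) - (if c = c₀ then f b (fstar b (f c₀ (x c₀))) else 0)) :=
            Finset.sum_congr rfl (fun c _ => hL c)
        _ = (∑ c, f c (x c)) - f b (fstar b (f c₀ (x c₀))) := by
            rw [Finset.sum_sub_distrib, Finset.sum_ite_eq' Finset.univ c₀]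
            simp
        _ = ∑ c, (f c (x c) - (if c = b then f b (fstar b (f c₀ (x c₀))) else 0)) := by
            rw [Finset.sum_sub_distrib, Finset.sum_ite_eq' Finset.univ b]
            simp
        _ = ∑ c, f c (φ x c) := Finset.sum_congr rfl (fun c _ => (hR c).symm)
    have heq : (fun x : ∀ c, Vc c => ∑ c,
        (if τ c = i then
            (LinearMap.id - (f (τ.symm ip1)) ∘ₗ (fstar (τ.symm ip1))) ∘ₗ (f c)
          else f c) (x c))
        = (fun x : ∀ c, Vc c => ∑ c, f c (x c)) ∘ φ := funext fun x => key x
    rw [heq]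
    exact hf.comp hφbij
  · -- the identities
    intro c
    by_cases h : τ c = i
    · simp only [if_pos h]
      have hlt : τ c < τ b := by rw [h, hτb]; exact hilt
      have e1 : ∀ u, fstar b (f b u) = u := fun u => by
        have := LinearMap.ext_iff.mp (hstarid b) u
        simpa using this
      have e2 : ∀ u, fstar c (f b u) = 0 := fun u => by
        have := LinearMap.ext_iff.mp (hstar0 b c hlt) u
        simpa using this
      have e3 : ∀ v, fstar c (f c v) = v := fun v => by
        have := LinearMap.ext_iff.mp (hstarid c) v
        simpa using this
      ext v
      simp only [LinearMap.comp_apply, LinearMap.sub_apply, LinearMap.id_apply,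
        LinearEquiv.coe_coe, map_sub, e1, e2, e3, sub_self, map_zero, sub_zero]
      abel
    · simp only [if_neg h]
      exact hstarid c
end

section
/- In the setting of Stokes data, with R_i := id − f_{τ⁻¹(i)} f*_{τ⁻¹(i)} and R'_{i+2} := id − R_{i+2} f_{τ⁻¹(i+1)} f*_{τ⁻¹(i+1)} R*_{i+2}, one has R'_{i+2} ∘ R_{i+2} = R_{i+2} ∘ R_{i+1} ∘ R_{i+2}. -/
lemma stmt7_aux {A : Type*} [Ring A] (a b s : A) (ha : a * a = a) (hsa : s * a = s) :
    (1 - (1 - a) * b * (1 - s)) * (1 - a) = (1 - a) * (1 - b) * (1 - a) := by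
  have e1 : (1 - s) * (1 - a) = 1 - a := by
    rw [sub_mul, one_mul, mul_sub, mul_one, hsa]; abel
  have e2 : (1 - a) * (1 - a) = 1 - a := by
    rw [sub_mul, one_mul, mul_sub, mul_one, ha]; abel
  calc (1 - (1 - a) * b * (1 - s)) * (1 - a)
      = (1 - a) - (1 - a) * b * ((1 - s) * (1 - a)) := by noncomm_ring
    _ = (1 - a) - (1 - a) * b * (1 - a) := by rw [e1]
    _ = (1 - a) * (1 - a) - (1 - a) * b * (1 - a) := by rw [e2]
    _ = (1 - a) * (1 - b) * (1 - a) := by noncomm_ring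

/-- In the setting of Stokes data, with `R_j := id − f_{τ⁻¹(j)} f*_{τ⁻¹(j)}`,
`R*_j := id − T f_{τ⁻¹(j)} T_{τ⁻¹(j)}⁻¹ f*_{τ⁻¹(j)}` and
`R'_{i+2} := id − R_{i+2} f_{τ⁻¹(i+1)} f*_{τ⁻¹(i+1)} R*_{i+2}`, one has
`R'_{i+2} ∘ R_{i+2} = R_{i+2} ∘ R_{i+1} ∘ R_{i+2}`. -/
theorem stmt7 (k : Type*) [Field k] (C : Type*) [Fintype C] (m : ℕ) (τ : C ≃ Fin m)
    (V : Type*) [AddCommGroup V] [Module k V] [FiniteDimensional k V]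
    (Vc : C → Type*) [∀ c, AddCommGroup (Vc c)] [∀ c, Module k (Vc c)]
    [∀ c, FiniteDimensional k (Vc c)]
    (T : V ≃ₗ[k] V) (Tc : ∀ c, Vc c ≃ₗ[k] Vc c)
    (f : ∀ c, Vc c →ₗ[k] V) (fstar : ∀ c, V →ₗ[k] Vc c)
    (hf : Function.Bijective (fun x : ∀ c, Vc c => ∑ c, f c (x c)))
    (hstar0 : ∀ c c' : C, τ c' < τ c → (fstar c') ∘ₗ (f c) = 0)
    (hstarid : ∀ c : C, (fstar c) ∘ₗ (f c) = LinearMap.id)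
    (hbang0 : ∀ c c' : C, τ c < τ c' →
      ((Tc c').symm.toLinearMap ∘ₗ (fstar c') ∘ₗ T.toLinearMap) ∘ₗ (f c) = 0)
    (hbangid : ∀ c : C,
      ((Tc c).symm.toLinearMap ∘ₗ (fstar c) ∘ₗ T.toLinearMap) ∘ₗ (f c) = LinearMap.id)
    (i i1 i2 : Fin m) (hi1 : (i1 : ℕ) = (i : ℕ) + 1) (hi2 : (i2 : ℕ) = (i : ℕ) + 2)
    (R : Fin m → (V →ₗ[k] V))
    (hR : ∀ j, R j = LinearMap.id - (f (τ.symm j)) ∘ₗ (fstar (τ.symm j)))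
    (Rstar : Fin m → (V →ₗ[k] V))
    (hRstar : ∀ j, Rstar j = LinearMap.id - T.toLinearMap ∘ₗ (f (τ.symm j)) ∘ₗ
      (Tc (τ.symm j)).symm.toLinearMap ∘ₗ (fstar (τ.symm j))) :
    (LinearMap.id -
        (R i2) ∘ₗ (f (τ.symm i1)) ∘ₗ (fstar (τ.symm i1)) ∘ₗ (Rstar i2)) ∘ₗ (R i2) =
      (R i2) ∘ₗ (R i1) ∘ₗ (R i2) := by
  have h2 : ∀ v, fstar (τ.symm i2) (f (τ.symm i2) v) = v := fun v =>
    LinearMap.congr_fun (hstarid (τ.symm i2)) v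
  rw [hR i2, hR i1, hRstar i2]
  set a : V →ₗ[k] V := f (τ.symm i2) ∘ₗ fstar (τ.symm i2) with ha_def
  set b : V →ₗ[k] V := f (τ.symm i1) ∘ₗ fstar (τ.symm i1) with hb_def
  set s : V →ₗ[k] V := T.toLinearMap ∘ₗ f (τ.symm i2) ∘ₗ
      (Tc (τ.symm i2)).symm.toLinearMap ∘ₗ fstar (τ.symm i2) with hs_def
  have ha : a * a = a := by
    ext v; simp [ha_def, Module.End.mul_apply, h2]
  have hsa : s * a = s := by
    ext v; simp [hs_def, ha_def, Module.End.mul_apply, h2]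
  have key := stmt7_aux a b s ha hsa
  have goal : (1 - (1 - a) * b * (1 - s)) * (1 - a) = (1 - a) * (1 - b) * (1 - a) := key
  simpa [Module.End.mul_eq_comp, Module.End.one_eq_id, LinearMap.comp_assoc,
    ha_def, hb_def, hs_def] using goal
end

section
/- Let ((V,T), (V_c,T_c)_{c∈C}, f, f*) be Stokes data of type (C,τ) with m = |C|, c_i := τ⁻¹(i), R_j := id − f_{c_j} f*_{c_j}. Then for each i ∈ {1,…,m}: (∑_{i ≤ j ≤ m} R_m∘⋯∘R_{j+1}∘f_{c_j}∘f*_{c_j}) ∘ f_{c_i} = f_{c_i}. (Here for j = m the empty composition R_m∘⋯∘R_{m+1} is the identity.) -/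
/-- Telescoping identity for Stokes data: with `c_i := τ⁻¹(i)` (here data is indexed
directly by `i ∈ {1,…,m}`), `R_j := id − f_{c_j} f*_{c_j}`, for each `i ∈ {1,…,m}`:
`(∑_{i ≤ j ≤ m} R_m∘⋯∘R_{j+1}∘f_{c_j}∘f*_{c_j}) ∘ f_{c_i} = f_{c_i}`,
where for `j = m` the empty composition is the identity. -/
theorem stmt9 (k : Type*) [Field k] (m : ℕ)
    (V : Type*) [AddCommGroup V] [Module k V] [FiniteDimensional k V]
    (Vc : ℕ → Type*) [∀ j, AddCommGroup (Vc j)] [∀ j, Module k (Vc j)]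
    [∀ j, FiniteDimensional k (Vc j)]
    (f : ∀ j, Vc j →ₗ[k] V) (fstar : ∀ j, V →ₗ[k] Vc j)
    (hstar0 : ∀ i j : ℕ, 1 ≤ j → j < i → i ≤ m → (fstar j) ∘ₗ (f i) = 0)
    (hstarid : ∀ i : ℕ, 1 ≤ i → i ≤ m → (fstar i) ∘ₗ (f i) = LinearMap.id)
    (R : ℕ → (V →ₗ[k] V))
    (hR : ∀ j, R j = LinearMap.id - (f j) ∘ₗ (fstar j))
    (compR : ℕ → (V →ₗ[k] V))
    (hcompR : ∀ j, compR j =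
      ((List.range (m - j)).map (fun t => R (j + 1 + t))).foldl
        (fun acc a => a ∘ₗ acc) LinearMap.id) :
    ∀ i : ℕ, 1 ≤ i → i ≤ m →
      (∑ j ∈ Finset.Icc i m, (compR j) ∘ₗ (f j) ∘ₗ (fstar j)) ∘ₗ (f i) = f i := by
  have foldl_comp : ∀ (l : List (V →ₗ[k] V)) (b c : V →ₗ[k] V),
      l.foldl (fun acc a => a ∘ₗ acc) (b ∘ₗ c)
        = (l.foldl (fun acc a => a ∘ₗ acc) b) ∘ₗ c := by
    intro l
    induction l with
    | nil => intro b c; simp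
    | cons h t ih =>
      intro b c
      simp only [List.foldl_cons]
      rw [← LinearMap.comp_assoc, ih]
  have compR_m : compR m = LinearMap.id := by simp [hcompR]
  have step : ∀ j, j + 1 ≤ m → compR j = (compR (j + 1)) ∘ₗ R (j + 1) := by
    intro j hj
    have h1 : m - j = (m - (j + 1)) + 1 := by omega
    rw [hcompR j, hcompR (j + 1), h1, List.range_succ_eq_map]
    simp only [List.map_cons, List.foldl_cons, List.map_map, add_zero]
    have hfun : (fun t => R (j + 1 + t)) ∘ Nat.succ = fun t => R (j + 1 + 1 + t) := by
      funext t
      simp only [Function.comp_apply]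
      congr 1
      omega
    rw [hfun]
    have h2 : R (j + 1) ∘ₗ LinearMap.id = LinearMap.id ∘ₗ R (j + 1) := by simp
    rw [h2, foldl_comp]
  have Rf : ∀ i, 1 ≤ i → i ≤ m → (R i) ∘ₗ f i = 0 := by
    intro i h1 h2
    rw [hR i, LinearMap.sub_comp, LinearMap.id_comp, LinearMap.comp_assoc,
      hstarid i h1 h2, LinearMap.comp_id, sub_self]
  have ffstar : ∀ j, (f j) ∘ₗ (fstar j) = LinearMap.id - R j := by
    intro j
    rw [hR j, sub_sub_cancel]
  have key : ∀ n i, i + n = m → 1 ≤ i →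
      (∑ j ∈ Finset.Icc i m, (compR j) ∘ₗ (f j) ∘ₗ (fstar j))
        = LinearMap.id - compR (i - 1) := by
    intro n
    induction n with
    | zero =>
      intro i him hi
      have hie : i = m := by omega
      subst hie
      rw [Finset.Icc_self, Finset.sum_singleton, ffstar i, compR_m,
        LinearMap.id_comp]
      have h3 : i - 1 + 1 = i := by omega
      have h4 := step (i - 1) (by omega)
      rw [h3] at h4
      rw [h4, compR_m, LinearMap.id_comp]
    | succ n ih =>
      intro i him hi
      have hsplit : Finset.Icc i m = insert i (Finset.Icc (i + 1) m) := by
        ext x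
        simp only [Finset.mem_Icc, Finset.mem_insert]
        omega
      have hnotmem : i ∉ Finset.Icc (i + 1) m := by
        simp only [Finset.mem_Icc]
        omega
      rw [hsplit, Finset.sum_insert hnotmem, ih (i + 1) (by omega) (by omega)]
      have h3 : i + 1 - 1 = i := by omega
      rw [h3, ffstar i]
      have h4 : i - 1 + 1 = i := by omega
      have h5 := step (i - 1) (by omega)
      rw [h4] at h5
      rw [h5]
      rw [LinearMap.comp_sub, LinearMap.comp_id]
      abel
  intro i h1 h2
  rw [key (m - i) i (by omega) h1, LinearMap.sub_comp, LinearMap.id_comp]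
  have h4 : i - 1 + 1 = i := by omega
  have h5 := step (i - 1) (by omega)
  rw [h4] at h5
  rw [h5, LinearMap.comp_assoc, Rf i h1 h2, LinearMap.comp_zero, sub_zero]
end

section
/- Let ((V,T),(V_c,T_c)_{c∈C},f,f*) be Stokes data compatible with a non-degenerate pairing [·,·⟩ on V (each f_c isometric onto its image with non-degenerate induced pairing, and f*_c left-adjoint to f_c). Then for the mutation operators R_i := id − f_{τ⁻¹(i)} f*_{τ⁻¹(i)} and R*_i := id − T f_{τ⁻¹(i)} T⁻¹_{τ⁻¹(i)} f*_{τ⁻¹(i)}, one has [v, R_i w⟩ = [R*_i v, w⟩ for all v,w ∈ V. -/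
/-- For Stokes data compatible with a non-degenerate pairing `[·,·⟩` on `V`
(each `f_c` isometric with non-degenerate induced pairings `[·,·⟩_c`, monodromy
compatibilities `[v,w⟩ = [Tw,v⟩` and `[v,w⟩_c = [T_c w, v⟩_c`, and `f*_c`
left-adjoint to `f_c`), the mutation operators
`R_i := id − f_{τ⁻¹(i)} f*_{τ⁻¹(i)}` and
`R*_i := id − T f_{τ⁻¹(i)} T_{τ⁻¹(i)}⁻¹ f*_{τ⁻¹(i)}` satisfy
`[v, R_i w⟩ = [R*_i v, w⟩` for all `v, w ∈ V`. -/
theorem stmt12 (k : Type*) [Field k] (C : Type*) [Fintype C] (m : ℕ) (τ : C ≃ Fin m)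
    (V : Type*) [AddCommGroup V] [Module k V] [FiniteDimensional k V]
    (Vc : C → Type*) [∀ c, AddCommGroup (Vc c)] [∀ c, Module k (Vc c)]
    [∀ c, FiniteDimensional k (Vc c)]
    (B : V →ₗ[k] V →ₗ[k] k) (hB : Function.Bijective fun v : V => B v)
    (T : V ≃ₗ[k] V) (hT : ∀ v w : V, B v w = B (T w) v)
    (Bc : ∀ c, Vc c →ₗ[k] Vc c →ₗ[k] k)
    (hBc : ∀ c, Function.Bijective fun v : Vc c => Bc c v)
    (Tc : ∀ c, Vc c ≃ₗ[k] Vc c)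
    (hTc : ∀ c, ∀ v w : Vc c, Bc c v w = Bc c (Tc c w) v)
    (f : ∀ c, Vc c →ₗ[k] V) (fstar : ∀ c, V →ₗ[k] Vc c)
    (hf : Function.Bijective (fun x : ∀ c, Vc c => ∑ c, f c (x c)))
    (hiso : ∀ c, ∀ v w : Vc c, B (f c v) (f c w) = Bc c v w)
    (hadj : ∀ c, ∀ (v : V) (w : Vc c), B v (f c w) = Bc c (fstar c v) w)
    (i : Fin m) :
    ∀ v w : V,
      B v (((LinearMap.id - (f (τ.symm i)) ∘ₗ (fstar (τ.symm i))) : V →ₗ[k] V) w) =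
        B (((LinearMap.id - T.toLinearMap ∘ₗ (f (τ.symm i)) ∘ₗ
            (Tc (τ.symm i)).symm.toLinearMap ∘ₗ (fstar (τ.symm i))) : V →ₗ[k] V) v) w := by
  intro v w
  set c := τ.symm i
  have hR : B (T (f c ((Tc c).symm (fstar c v)))) w = Bc c (fstar c v) (fstar c w) := by
    rw [← hT, hadj, hTc, LinearEquiv.apply_symm_apply]
  simp only [LinearMap.sub_apply, LinearMap.comp_apply, LinearMap.id_apply, map_sub,
    LinearEquiv.coe_coe, hR, hadj]
end

section
/- Let X be an n-dimensional compact complex manifold and suppose H^odd(X) ∩ E ≠ 0, where E is a generalized eigenspace of the (graded-commutative, Frobenius) quantum multiplication c₁(X)*₀ with eigenvalue λ, with respect to a non-degenerate Poincaré pairing. Then dim(H^ev(X) ∩ E) ≥ 2. Consequently, if the even part of quantum cohomology satisfies Property O (the extremal eigenvalue T has a one-dimensional eigenspace in H^ev), then the full cohomology also satisfies Property O. -/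
/-- Abstract form of the Hertling–Iritani argument: let `H = H^{ev} ⊕ H^{odd}` be the
(ℤ/2-graded) cohomology of a compact complex manifold, equipped with the
graded-commutative associative quantum product `*₀` (with unit `1 ∈ H^{ev}`), and a
non-degenerate Poincaré pairing `B` vanishing between even and odd parts, which is
Frobenius for the product. Let `E` be the generalized `λ`-eigenspace of quantum
multiplication by `c₁(X) ∈ H^{ev}`. If `H^{odd} ∩ E ≠ 0`, then
`dim(H^{ev} ∩ E) ≥ 2`. Consequently, if the eigenvalue has a one-dimensional
generalized eigenspace in `H^{ev}` (Property O for the even part), then the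
generalized eigenspace in the full cohomology is also one-dimensional. -/
theorem stmt17 (H : Type*) [AddCommGroup H] [Module ℂ H] [FiniteDimensional ℂ H]
    (Hev Hodd : Submodule ℂ H) (hcompl : IsCompl Hev Hodd)
    (mul : H →ₗ[ℂ] H →ₗ[ℂ] H)
    (hassoc : ∀ x y z : H, mul (mul x y) z = mul x (mul y z))
    (one : H) (hone_ev : one ∈ Hev) (hone_mul : ∀ x : H, mul one x = x)
    (hcomm_ev : ∀ x ∈ Hev, ∀ y : H, mul x y = mul y x)
    (hanti : ∀ x ∈ Hodd, ∀ y ∈ Hodd, mul x y = -mul y x)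
    (hee : ∀ x ∈ Hev, ∀ y ∈ Hev, mul x y ∈ Hev)
    (hoo : ∀ x ∈ Hodd, ∀ y ∈ Hodd, mul x y ∈ Hev)
    (heo : ∀ x ∈ Hev, ∀ y ∈ Hodd, mul x y ∈ Hodd)
    (hoe : ∀ x ∈ Hodd, ∀ y ∈ Hev, mul x y ∈ Hodd)
    (B : H →ₗ[ℂ] H →ₗ[ℂ] ℂ) (hB : Function.Bijective fun v : H => B v)
    (hBeo : ∀ x ∈ Hev, ∀ y ∈ Hodd, B x y = 0)
    (hBoe : ∀ x ∈ Hodd, ∀ y ∈ Hev, B x y = 0)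
    (hFrob : ∀ x y z : H, B (mul x y) z = B x (mul y z))
    (c : H) (hc : c ∈ Hev) (lam : ℂ)
    (E : Submodule ℂ H)
    (hE : E = Module.End.maxGenEigenspace (mul c : Module.End ℂ H) lam) :
    (Hodd ⊓ E ≠ ⊥ → 2 ≤ Module.finrank ℂ ↥(Hev ⊓ E)) ∧
      (Module.finrank ℂ ↥(Hev ⊓ E) = 1 → Module.finrank ℂ ↥E = 1) := by
  classical
  set L : Module.End ℂ H := (mul c : Module.End ℂ H) with hL
  set g : Module.End ℂ H := L - lam • 1 with hg
  set N : ℕ := Module.finrank ℂ H with hN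
  -- E is the kernel of g ^ N
  have hEker : E = LinearMap.ker (g ^ N) := by
    rw [hE, Module.End.maxGenEigenspace_eq_genEigenspace_finrank,
      Module.End.genEigenspace_nat]
  have hgapp : ∀ x : H, g x = L x - lam • x := by
    intro x
    simp [hg]
  -- B is self-adjoint for L, hence for powers of g
  have hadjL : ∀ x y : H, B (L x) y = B x (L y) := by
    intro x y
    have h1 : L x = mul x c := by rw [hL]; exact hcomm_ev c hc x
    rw [h1]
    exact hFrob x c y
  have hadj : ∀ x y : H, B (g x) y = B x (g y) := by
    intro x y
    rw [hgapp, hgapp]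
    rw [map_sub, map_smul, LinearMap.sub_apply, LinearMap.smul_apply,
      map_sub, map_smul, hadjL]
  have hadjpow : ∀ (k : ℕ) (x y : H), B ((g ^ k) x) y = B x ((g ^ k) y) := by
    intro k
    induction k with
    | zero => intro x y; simp
    | succ k ih =>
      intro x y
      calc B ((g ^ (k + 1)) x) y = B ((g ^ k) (g x)) y := by
              rw [pow_succ, Module.End.mul_apply]
        _ = B (g x) ((g ^ k) y) := ih _ _
        _ = B x (g ((g ^ k) y)) := hadj _ _
        _ = B x ((g ^ (k + 1)) y) := by rw [pow_succ', Module.End.mul_apply]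
  -- g powers preserve Hev and Hodd
  have hgev : ∀ x ∈ Hev, g x ∈ Hev := by
    intro x hx
    rw [hgapp]
    exact Submodule.sub_mem _ (hee c hc x hx) (Submodule.smul_mem _ _ hx)
  have hgodd : ∀ x ∈ Hodd, g x ∈ Hodd := by
    intro x hx
    rw [hgapp]
    exact Submodule.sub_mem _ (heo c hc x hx) (Submodule.smul_mem _ _ hx)
  have hgevp : ∀ (k : ℕ), ∀ x ∈ Hev, (g ^ k) x ∈ Hev := by
    intro k
    induction k with
    | zero => intro x hx; simpa using hx
    | succ k ih =>
      intro x hx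
      rw [pow_succ, Module.End.mul_apply]
      exact ih _ (hgev x hx)
  have hgoddp : ∀ (k : ℕ), ∀ x ∈ Hodd, (g ^ k) x ∈ Hodd := by
    intro k
    induction k with
    | zero => intro x hx; simpa using hx
    | succ k ih =>
      intro x hx
      rw [pow_succ, Module.End.mul_apply]
      exact ih _ (hgodd x hx)
  -- decomposition of arbitrary vectors
  have hdecomp : ∀ v : H, ∃ a ∈ Hev, ∃ b ∈ Hodd, a + b = v := by
    intro v
    have : v ∈ Hev ⊔ Hodd := by rw [hcompl.sup_eq_top]; trivial
    exact Submodule.mem_sup.mp this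
  have hzero : ∀ a ∈ Hev, ∀ b ∈ Hodd, a + b = 0 → a = 0 ∧ b = 0 := by
    intro a ha b hb hab
    have hmem : a ∈ Hev ⊓ Hodd := by
      refine ⟨ha, ?_⟩
      rw [eq_neg_of_add_eq_zero_left hab]
      exact Submodule.neg_mem _ hb
    rw [disjoint_iff.mp hcompl.disjoint] at hmem
    have ha0 : a = 0 := by simpa using hmem
    refine ⟨ha0, ?_⟩
    rw [ha0, zero_add] at hab
    exact hab
  -- splitting of E
  have hsplit : ∀ x ∈ E, ∃ a, a ∈ Hev ⊓ E ∧ ∃ b, b ∈ Hodd ⊓ E ∧ x = a + b := by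
    intro x hx
    obtain ⟨a, ha, b, hb, hab⟩ := hdecomp x
    have hxk : (g ^ N) x = 0 := by rw [hEker] at hx; exact hx
    have h0 : (g ^ N) a + (g ^ N) b = 0 := by
      rw [← map_add, hab, hxk]
    obtain ⟨h1, h2⟩ := hzero _ (hgevp N a ha) _ (hgoddp N b hb) h0
    exact ⟨a, ⟨ha, by rw [hEker]; exact h1⟩, b, ⟨hb, by rw [hEker]; exact h2⟩, hab.symm⟩
  -- Fitting decomposition
  have hsup : LinearMap.ker (g ^ N) ⊔ LinearMap.range (g ^ N) = ⊤ := by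
    have hdis : Disjoint (LinearMap.range (g ^ N)) (LinearMap.ker (g ^ N)) := by
      have := Module.End.generalized_eigenvec_disjoint_range_ker L lam
      rwa [Module.End.genEigenrange_nat, Module.End.genEigenspace_nat, ← hg, ← hN] at this
    apply Submodule.eq_top_of_finrank_eq
    have h1 := Submodule.finrank_sup_add_finrank_inf_eq
      (LinearMap.ker (g ^ N)) (LinearMap.range (g ^ N))
    have h2 := LinearMap.finrank_range_add_finrank_ker (g ^ N : H →ₗ[ℂ] H)
    rw [inf_comm, disjoint_iff.mp hdis, finrank_bot ℂ H, add_zero] at h1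
    omega
  -- injectivity of B
  have hBinj : ∀ x : H, (∀ y : H, B x y = 0) → x = 0 := by
    intro x hx
    apply hB.injective
    ext y
    simp [hx y]
  -- squares of odd elements vanish
  have hsq : ∀ x ∈ Hodd, mul x x = 0 := by
    intro x hx
    have h := hanti x hx x hx
    have h2 : (2 : ℂ) • mul x x = 0 := by
      rw [two_smul]
      nth_rewrite 2 [h]
      simp
    simpa using h2
  -- g acts on the first factor of a product
  have hgmul : ∀ x y : H, g (mul x y) = mul (g x) y := by
    intro x y
    rw [hgapp, hgapp]
    rw [map_sub, map_smul, LinearMap.sub_apply, LinearMap.smul_apply]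
    congr 1
    rw [hL]
    exact (hassoc c x y).symm
  have hgmulp : ∀ (k : ℕ) (x y : H), (g ^ k) (mul x y) = mul ((g ^ k) x) y := by
    intro k
    induction k with
    | zero => intro x y; simp
    | succ k ih =>
      intro x y
      rw [pow_succ', Module.End.mul_apply, Module.End.mul_apply, ih, hgmul]
  -- MAIN ARGUMENT, part 1
  have key : Hodd ⊓ E ≠ ⊥ → 2 ≤ Module.finrank ℂ ↥(Hev ⊓ E) := by
    intro hne
    obtain ⟨α, hα, hα0⟩ := Submodule.exists_mem_ne_zero_of_ne_bot hne
    obtain ⟨hαo, hαE⟩ : α ∈ Hodd ∧ α ∈ E := hα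
    -- find odd β with B α β ≠ 0
    have hβex : ∃ β ∈ Hodd, B α β ≠ 0 := by
      by_contra hcon
      push_neg at hcon
      apply hα0
      apply hBinj
      intro y
      obtain ⟨a, ha, b, hb, hab⟩ := hdecomp y
      rw [← hab, map_add, hBoe α hαo a ha, hcon b hb, add_zero]
    obtain ⟨β, hβo, hβne⟩ := hβex
    set γ : H := mul α β with hγ
    have hγev : γ ∈ Hev := hoo α hαo β hβo
    have hγE : γ ∈ E := by
      rw [hEker]
      show (g ^ N) γ = 0
      rw [hγ, hgmulp]
      have hz : (g ^ N) α = 0 := by rw [hEker] at hαE; exact hαE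
      rw [hz]
      simp
    have hγone : B γ one = B α β := by
      rw [hγ, hFrob]
      congr 1
      rw [← hcomm_ev one hone_ev β, hone_mul]
    have hγ0 : γ ≠ 0 := by
      intro h
      apply hβne
      rw [← hγone, h]
      simp
    have hβγ : mul β γ = 0 := by
      rw [hγ, ← hassoc, hanti β hβo α hαo, map_neg, LinearMap.neg_apply,
        hassoc, hsq β hβo]
      simp
    have hγγ : B γ γ = 0 := by
      nth_rewrite 1 [hγ]
      rw [hFrob, hβγ]
      simp
    -- now show the dimension bound
    by_contra hlt
    push_neg at hlt
    have hγS : γ ∈ Hev ⊓ E := ⟨hγev, hγE⟩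
    have hpos : 0 < Module.finrank ℂ ↥(Hev ⊓ E) := by
      have : Nontrivial ↥(Hev ⊓ E) :=
        nontrivial_of_ne (⟨γ, hγS⟩ : ↥(Hev ⊓ E)) 0
          (by simp [Submodule.mk_eq_zero, hγ0])
      exact Module.finrank_pos
    have hone' : Module.finrank ℂ ↥(Hev ⊓ E) = 1 := by omega
    have hvγ0 : (⟨γ, hγS⟩ : ↥(Hev ⊓ E)) ≠ 0 := by
      simp [Submodule.mk_eq_zero, hγ0]
    have hmult := (finrank_eq_one_iff_of_nonzero' (⟨γ, hγS⟩ : ↥(Hev ⊓ E)) hvγ0).mp hone'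
    have hy : ∀ y, (hy : y ∈ Hev ⊓ E) → ∃ a : ℂ, y = a • γ := by
      intro y hyS
      obtain ⟨a, ha⟩ := hmult ⟨y, hyS⟩
      refine ⟨a, ?_⟩
      have := congrArg Subtype.val ha
      simpa using this.symm
    have hall : ∀ v : H, B γ v = 0 := by
      intro v
      have hv : v ∈ LinearMap.ker (g ^ N) ⊔ LinearMap.range (g ^ N) := by
        rw [hsup]; trivial
      obtain ⟨e, he, w', hw', hew⟩ := Submodule.mem_sup.mp hv
      obtain ⟨w, rfl⟩ := hw'
      have hBw : B γ ((g ^ N) w) = 0 := by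
        rw [← hadjpow]
        have hz : (g ^ N) γ = 0 := by rw [hEker] at hγE; exact hγE
        rw [hz]
        simp
      have hBe : B γ e = 0 := by
        have heE : e ∈ E := by rw [hEker]; exact he
        obtain ⟨a, haS, b, hbS, rfl⟩ := hsplit e heE
        obtain ⟨t, rfl⟩ := hy a haS
        rw [map_add, hBeo γ hγev b hbS.1, map_smul, hγγ]
        simp
      rw [← hew, map_add, hBe, hBw, add_zero]
    exact hγ0 (hBinj γ hall)
  refine ⟨key, ?_⟩
  intro h1
  have hbot : Hodd ⊓ E = ⊥ := by
    by_contra hne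
    have := key hne
    omega
  have hle : E ≤ Hev := by
    intro x hx
    obtain ⟨a, ha, b, hb, hab⟩ := hsplit x hx
    have hb0 : b = 0 := by
      have hmem : b ∈ (⊥ : Submodule ℂ H) := hbot ▸ hb
      simpa using hmem
    rw [hab, hb0, add_zero]
    exact ha.1
  rw [inf_eq_right.mpr hle] at h1
  exact h1
end
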